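/- Let f be a self-concordant function on R^n, g its gradient, f* its Fenchel conjugate with gradient g* and Hessian H*. Write θ(x) = g*(x) and local dual norms ‖v‖*_z = √⟨v, H*(z)v⟩ and ‖v‖_{θ} = √⟨v, H(θ)v⟩. For x, z ∈ int(dom f*), if ‖θ(x) − θ(z)‖_{θ(z)} < 1 then ‖x − z‖*_z ≤ ‖θ(x) − θ(z)‖_{θ(z)} / (1 − ‖θ(x) − θ(z)‖_{θ(z)}) and ‖x − z‖*_z / (1 + ‖x − z‖*_z) ≤ ‖θ(x) − θ(z)‖_{θ(z)}. -/

import Mathlib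

open scoped RealInnerProductSpace

/-- Local norm `‖v‖_θ = √⟨v, H(θ)v⟩` induced by a family of operators `H`. -/
noncomputable def lnormH {n : ℕ}
    (H : EuclideanSpace ℝ (Fin n) → (EuclideanSpace ℝ (Fin n) →ₗ[ℝ] EuclideanSpace ℝ (Fin n)))
    (θ v : EuclideanSpace ℝ (Fin n)) : ℝ :=
  Real.sqrt ⟪v, H θ v⟫

section aux

variable {n : ℕ} (H : EuclideanSpace ℝ (Fin n) → (EuclideanSpace ℝ (Fin n) →ₗ[ℝ] EuclideanSpace ℝ (Fin n)))

lemma qH_nonneg (hHpd : ∀ θ v, v ≠ 0 → 0 < ⟪v, H θ v⟫) (θ v : EuclideanSpace ℝ (Fin n)) :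
    0 ≤ ⟪v, H θ v⟫ := by
  rcases eq_or_ne v 0 with rfl | hv
  · simp
  · exact (hHpd θ v hv).le

lemma lnormH_nonneg (θ v : EuclideanSpace ℝ (Fin n)) : 0 ≤ lnormH H θ v :=
  Real.sqrt_nonneg _

lemma lnormH_sq (hHpd : ∀ θ v, v ≠ 0 → 0 < ⟪v, H θ v⟫) (θ v : EuclideanSpace ℝ (Fin n)) :
    lnormH H θ v ^ 2 = ⟪v, H θ v⟫ :=
  Real.sq_sqrt (qH_nonneg H hHpd θ v)

lemma lnormH_smul (t : ℝ) (θ v : EuclideanSpace ℝ (Fin n)) :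
    lnormH H θ (t • v) = |t| * lnormH H θ v := by
  unfold lnormH
  rw [map_smul, real_inner_smul_left, inner_smul_right]
  rw [show t * (t * ⟪v, H θ v⟫) = t ^ 2 * ⟪v, H θ v⟫ by ring,
    Real.sqrt_mul (sq_nonneg t), Real.sqrt_sq_eq_abs]

/-- Cauchy–Schwarz for the local inner product. -/
lemma cs_lnormH (hHsymm : ∀ θ v w, ⟪H θ v, w⟫ = ⟪v, H θ w⟫)
    (hHpd : ∀ θ v, v ≠ 0 → 0 < ⟪v, H θ v⟫) (θ u v : EuclideanSpace ℝ (Fin n)) :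
    ⟪u, H θ v⟫ ≤ lnormH H θ u * lnormH H θ v := by
  have hsym : ∀ a b : EuclideanSpace ℝ (Fin n), ⟪a, H θ b⟫ = ⟪b, H θ a⟫ := by
    intro a b
    rw [← hHsymm θ a b, real_inner_comm]
  have key : ∀ s : ℝ, 0 ≤ ⟪v, H θ v⟫ * (s * s) + (-(2 * ⟪u, H θ v⟫)) * s + ⟪u, H θ u⟫ := by
    intro s
    have h0 := qH_nonneg H hHpd θ (u - s • v)
    have : ⟪u - s • v, H θ (u - s • v)⟫
        = ⟪v, H θ v⟫ * (s * s) + (-(2 * ⟪u, H θ v⟫)) * s + ⟪u, H θ u⟫ := by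
      rw [map_sub, map_smul, inner_sub_left, inner_sub_right, inner_sub_right,
        real_inner_smul_left, real_inner_smul_left, inner_smul_right, inner_smul_right,
        hsym v u]
      ring
    linarith [h0, this ▸ h0]
  have hd := discrim_le_zero key
  rw [discrim] at hd
  have h1 : ⟪u, H θ v⟫ ^ 2 ≤ ⟪u, H θ u⟫ * ⟪v, H θ v⟫ := by nlinarith
  calc ⟪u, H θ v⟫ ≤ |⟪u, H θ v⟫| := le_abs_self _
    _ = Real.sqrt (⟪u, H θ v⟫ ^ 2) := (Real.sqrt_sq_eq_abs _).symm
    _ ≤ Real.sqrt (⟪u, H θ u⟫ * ⟪v, H θ v⟫) := Real.sqrt_le_sqrt h1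
    _ = lnormH H θ u * lnormH H θ v :=
        Real.sqrt_mul (qH_nonneg H hHpd θ u) _

end aux

set_option maxHeartbeats 1600000 in
theorem stmt12 (n : ℕ)
    -- `g` is the gradient map of a self-concordant `f`, `H` its Hessian,
    -- `θmap = g*` the gradient of the conjugate `f*`, `Hstar = H*` its Hessian.
    (g θmap : EuclideanSpace ℝ (Fin n) → EuclideanSpace ℝ (Fin n))
    (H Hstar : EuclideanSpace ℝ (Fin n) → (EuclideanSpace ℝ (Fin n) →ₗ[ℝ] EuclideanSpace ℝ (Fin n)))
    (hHsymm : ∀ θ v w, ⟪H θ v, w⟫ = ⟪v, H θ w⟫)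
    (hHpd : ∀ θ v, v ≠ 0 → 0 < ⟪v, H θ v⟫)
    -- `H` is the derivative of the gradient map `g`:
    (hderiv : ∀ θ, HasFDerivAt g (LinearMap.toContinuousLinearMap (H θ)) θ)
    -- `H*(g(θ)) = H(θ)⁻¹`:
    (hHstar : ∀ θ v, Hstar (g θ) (H θ v) = v)
    -- self-concordance of `f` in Renegar's sense:
    (hsc : ∀ θ₀ θ₁ v, lnormH H θ₀ (θ₁ - θ₀) < 1 →
      (1 - lnormH H θ₀ (θ₁ - θ₀)) * lnormH H θ₀ v ≤ lnormH H θ₁ v ∧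
        lnormH H θ₁ v ≤ lnormH H θ₀ v / (1 - lnormH H θ₀ (θ₁ - θ₀)))
    (x z : EuclideanSpace ℝ (Fin n))
    -- `x, z ∈ int (dom f*)`, i.e. `g(θ(x)) = x` and `g(θ(z)) = z`:
    (hx : g (θmap x) = x) (hz : g (θmap z) = z)
    (hclose : lnormH H (θmap z) (θmap x - θmap z) < 1) :
    lnormH Hstar z (x - z) ≤
        lnormH H (θmap z) (θmap x - θmap z) / (1 - lnormH H (θmap z) (θmap x - θmap z)) ∧
      lnormH Hstar z (x - z) / (1 + lnormH Hstar z (x - z)) ≤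
        lnormH H (θmap z) (θmap x - θmap z) := by
  set θ0 := θmap z with hθ0
  set θ1 := θmap x with hθ1
  set d := θ1 - θ0 with hd
  set r := lnormH H θ0 d with hr
  have hr0 : 0 ≤ r := lnormH_nonneg H θ0 d
  have hr1 : (0:ℝ) < 1 - r := by linarith
  -- obtain u with H θ0 u = x - z
  have hinj : Function.Injective (H θ0) := by
    intro a b hab
    have : H θ0 (a - b) = 0 := by rw [map_sub, hab, sub_self]
    have h2 : Hstar (g θ0) (H θ0 (a - b)) = a - b := hHstar θ0 (a - b)
    rw [this, map_zero] at h2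
    exact sub_eq_zero.mp h2.symm
  obtain ⟨u, hu⟩ : ∃ u, H θ0 u = x - z :=
    (LinearMap.injective_iff_surjective.mp hinj) (x - z)
  set s := lnormH H θ0 u with hs
  have hs0 : 0 ≤ s := lnormH_nonneg H θ0 u
  -- lnormH Hstar z (x - z) = s
  have hkey : lnormH Hstar z (x - z) = s := by
    have : Hstar z (x - z) = u := by rw [← hu, ← hz, hHstar]
    rw [lnormH, this, ← hu, real_inner_comm, hs, lnormH]
  -- the path and its properties
  set γ : ℝ → EuclideanSpace ℝ (Fin n) := fun t => θ0 + t • d with hγ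
  have hγderiv : ∀ t : ℝ, HasDerivAt γ d t := by
    intro t
    have h1 : HasDerivAt (fun t : ℝ => t • d) ((1:ℝ) • d) t :=
      (hasDerivAt_id t).smul_const d
    have h2 := h1.const_add θ0
    rw [one_smul] at h2
    exact h2
  have hφderiv : ∀ t : ℝ, HasDerivAt (fun t => ⟪u, g (γ t)⟫) ⟪u, H (γ t) d⟫ t := by
    intro t
    have h1 : HasDerivAt (fun t => g (γ t)) (H (γ t) d) t := by
      have := (hderiv (γ t)).comp_hasDerivAt t (hγderiv t)
      simp at this; exact this
    have h2 := ((innerSL ℝ u).hasFDerivAt (x := g (γ t))).comp_hasDerivAt t h1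
    simp at h2; exact h2
  -- for t ∈ [0,1], self-concordance bounds
  have hclose' : ∀ t ∈ Set.Icc (0:ℝ) 1, lnormH H θ0 (γ t - θ0) = t * r := by
    intro t ht
    have : γ t - θ0 = t • d := by simp [hγ]
    rw [this, lnormH_smul, abs_of_nonneg ht.1]
  have htr : ∀ t ∈ Set.Icc (0:ℝ) 1, t * r < 1 := by
    intro t ht
    calc t * r ≤ 1 * r := by
          apply mul_le_mul_of_nonneg_right ht.2 hr0
      _ = r := one_mul r
      _ < 1 := hclose
  -- derivative bound
  have hbound : ∀ t ∈ Set.Icc (0:ℝ) 1, ⟪u, H (γ t) d⟫ ≤ s * r / (1 - t * r) ^ 2 := by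
    intro t ht
    have hc : lnormH H θ0 (γ t - θ0) < 1 := by rw [hclose' t ht]; exact htr t ht
    have h1 := (hsc θ0 (γ t) u hc).2
    have h2 := (hsc θ0 (γ t) d hc).2
    rw [hclose' t ht] at h1 h2
    have htr1 : (0:ℝ) < 1 - t * r := by linarith [htr t ht]
    have hcs := cs_lnormH H hHsymm hHpd (γ t) u d
    have hnn : 0 ≤ lnormH H (γ t) d := lnormH_nonneg H (γ t) d
    have hnnu : 0 ≤ lnormH H (γ t) u := lnormH_nonneg H (γ t) u
    calc ⟪u, H (γ t) d⟫ ≤ lnormH H (γ t) u * lnormH H (γ t) d := hcs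
      _ ≤ (s / (1 - t * r)) * (r / (1 - t * r)) := by
          apply mul_le_mul h1 h2 hnn (div_nonneg hs0 htr1.le)
      _ = s * r / (1 - t * r) ^ 2 := by rw [div_mul_div_comm, sq]
  -- define F and show it's monotone on [0,1]
  set F : ℝ → ℝ := fun t => s / (1 - t * r) - ⟪u, g (γ t)⟫ with hF
  have hFderiv : ∀ t ∈ Set.Icc (0:ℝ) 1,
      HasDerivAt F (s * r / (1 - t * r) ^ 2 - ⟪u, H (γ t) d⟫) t := by
    intro t ht
    have htr1 : (1:ℝ) - t * r ≠ 0 := by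
      have := htr t ht; intro h; linarith [htr t ht]
    have h1 : HasDerivAt (fun t : ℝ => 1 - t * r) (-r) t := by
      have := ((hasDerivAt_id t).mul_const r).const_sub (1:ℝ)
      simpa using this
    have h2 : HasDerivAt (fun t : ℝ => s / (1 - t * r)) (s * r / (1 - t * r) ^ 2) t := by
      have h3 := (h1.inv htr1).const_mul s
      simp only [div_eq_mul_inv]
      rw [show s * r * ((1 - t * r) ^ 2)⁻¹ = s * (- -r / (1 - t * r) ^ 2) by ring]
      exact h3
    exact h2.sub (hφderiv t)
  have hmono : MonotoneOn F (Set.Icc (0:ℝ) 1) := by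
    apply monotoneOn_of_deriv_nonneg (convex_Icc 0 1)
    · intro t ht
      exact (hFderiv t ht).continuousAt.continuousWithinAt
    · intro t ht
      rw [interior_Icc] at ht
      exact (hFderiv t (Set.Ioo_subset_Icc_self ht)).differentiableAt.differentiableWithinAt
    · intro t ht
      rw [interior_Icc] at ht
      have ht' := Set.Ioo_subset_Icc_self ht
      rw [(hFderiv t ht').deriv]
      linarith [hbound t ht']
  have hF01 : F 0 ≤ F 1 := hmono (Set.left_mem_Icc.mpr zero_le_one)
    (Set.right_mem_Icc.mpr zero_le_one) zero_le_one
  -- unfold F 0 and F 1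
  have hγ0 : γ 0 = θ0 := by simp [hγ]
  have hγ1 : γ 1 = θ1 := by simp [hγ, hd]
  have hF0 : F 0 = s - ⟪u, z⟫ := by simp [hF, hγ0, hz]
  have hF1 : F 1 = s / (1 - r) - ⟪u, x⟫ := by simp [hF, hγ1, hx]
  rw [hF0, hF1] at hF01
  -- ⟪u, x - z⟫ = s ^ 2
  have hsq : ⟪u, x - z⟫ = s ^ 2 := by
    rw [← hu, lnormH_sq H hHpd]
  have hinner : ⟪u, x⟫ - ⟪u, z⟫ = s ^ 2 := by
    rw [← inner_sub_right]; exact hsq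
  -- s^2 ≤ s * r / (1 - r)
  have hmain : s ^ 2 ≤ s * r / (1 - r) := by
    have : s / (1 - r) - s = s * r / (1 - r) := by field_simp; ring
    linarith [hF01, hinner, this]
  have hfirst : s ≤ r / (1 - r) := by
    rcases eq_or_lt_of_le hs0 with h | h
    · rw [← h]; positivity
    · rw [le_div_iff₀ hr1]
      have hmain' : s ^ 2 * (1 - r) ≤ s * r := by
        have h4 := mul_le_mul_of_nonneg_right hmain hr1.le
        rwa [div_mul_cancel₀ _ hr1.ne'] at h4
      nlinarith [hmain', h, mul_pos h hr1]
  refine ⟨hkey ▸ hfirst, ?_⟩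
  rw [hkey]
  rw [div_le_iff₀ (by linarith : (0:ℝ) < 1 + s)]
  rw [le_div_iff₀ hr1] at hfirst
  nlinarith [hfirst]
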